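/- Let σ > 0 and let k(x, y) = exp(−‖x − y‖²/(2σ²)) be the Gaussian kernel on ℝⁿ. Let y⁺₁, …, y⁺_M ∈ ℝⁿ and y⁻₁, …, y⁻_N ∈ ℝⁿ be finite families of points, with kernel density estimates p_KDE(x) = (1/M) Σₘ k(x, y⁺ₘ) and q_KDE(x) = (1/N) Σⱼ k(x, y⁻ⱼ). Define the normalized drift field V(x) = (Σₘ k(x, y⁺ₘ)(y⁺ₘ − x))/(Σₘ k(x, y⁺ₘ)) − (Σⱼ k(x, y⁻ⱼ)(y⁻ⱼ − x))/(Σⱼ k(x, y⁻ⱼ)). Then for all x ∈ ℝⁿ, V(x) = −σ² ∇ₓ log( q_KDE(x) / p_KDE(x) ); in particular V is conservative. -/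

import Mathlib

noncomputable section

open InnerProductSpace

section Helpers

variable {E : Type*} [NormedAddCommGroup E] [InnerProductSpace ℝ E] [CompleteSpace E]

lemma hasGradientAt_of_hasFDerivAt' {f : E → ℝ} {L : E →L[ℝ] ℝ} {v x : E}
    (h : HasFDerivAt f L x) (hv : ∀ w, L w = ⟪v, w⟫_ℝ) : HasGradientAt f v x := by
  rw [hasGradientAt_iff_hasFDerivAt]
  have : (toDual ℝ E) v = L := by
    ext w; simp [toDual_apply_apply, hv w]
  rw [this]; exact h

lemma gauss_hasGradientAt (σ : ℝ) (hσ : σ ≠ 0) (y x : E) :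
    HasGradientAt (fun z => Real.exp (-‖z - y‖ ^ 2 / (2 * σ ^ 2)))
      ((Real.exp (-‖x - y‖ ^ 2 / (2 * σ ^ 2)) * (σ ^ 2)⁻¹) • (y - x)) x := by
  have h1 : HasFDerivAt (fun z : E => ⟪z - y, z - y⟫_ℝ)
      ((fderivInnerCLM ℝ (x - y, x - y)).comp
        (((ContinuousLinearMap.id ℝ E).prod (ContinuousLinearMap.id ℝ E)))) x := by
    have := ((hasFDerivAt_id x).sub_const y).inner ℝ ((hasFDerivAt_id x).sub_const y)
    simpa using this
  have h2 := (h1.const_mul (-(2 * σ ^ 2)⁻¹)).exp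
  have heq : (fun z : E => Real.exp (-(2 * σ ^ 2)⁻¹ * ⟪z - y, z - y⟫_ℝ))
      = fun z => Real.exp (-‖z - y‖ ^ 2 / (2 * σ ^ 2)) := by
    funext z
    rw [real_inner_self_eq_norm_sq]
    ring_nf
  rw [← heq]
  apply hasGradientAt_of_hasFDerivAt' h2
  intro w
  simp only [ContinuousLinearMap.smul_apply, ContinuousLinearMap.coe_comp', Function.comp_apply,
    ContinuousLinearMap.prod_apply, ContinuousLinearMap.coe_id', id_eq, fderivInnerCLM_apply,
    smul_eq_mul]
  have hin : ⟪w, x - y⟫_ℝ = ⟪x, w⟫_ℝ - ⟪y, w⟫_ℝ := by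
    rw [real_inner_comm, inner_sub_left]
  rw [real_inner_self_eq_norm_sq, hin, real_inner_smul_left, inner_sub_left]
  have h3 : -(2 * σ ^ 2)⁻¹ * ‖x - y‖ ^ 2 = -‖x - y‖ ^ 2 / (2 * σ ^ 2) := by ring
  rw [h3]
  field_simp
  rw [inner_sub_left]
  ring

lemma hasGradientAt_sum' {ι : Type*} (s : Finset ι) (f : ι → E → ℝ) (g : ι → E) (x : E)
    (h : ∀ i ∈ s, HasGradientAt (f i) (g i) x) :
    HasGradientAt (fun z => ∑ i ∈ s, f i z) (∑ i ∈ s, g i) x := by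
  rw [hasGradientAt_iff_hasFDerivAt, map_sum]
  exact HasFDerivAt.fun_sum fun i hi => (h i hi).hasFDerivAt

lemma HasGradientAt.log' {f : E → ℝ} {g x : E} (h : HasGradientAt f g x) (hx : f x ≠ 0) :
    HasGradientAt (fun z => Real.log (f z)) ((f x)⁻¹ • g) x := by
  rw [hasGradientAt_iff_hasFDerivAt, map_smul]
  exact h.hasFDerivAt.log hx

lemma HasGradientAt.const_mul' {f : E → ℝ} {g x : E} (c : ℝ) (h : HasGradientAt f g x) :
    HasGradientAt (fun z => c * f z) (c • g) x := by
  rw [hasGradientAt_iff_hasFDerivAt, map_smul]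
  exact h.hasFDerivAt.const_mul c

lemma HasGradientAt.sub' {f₁ f₂ : E → ℝ} {g₁ g₂ x : E}
    (h₁ : HasGradientAt f₁ g₁ x) (h₂ : HasGradientAt f₂ g₂ x) :
    HasGradientAt (fun z => f₁ z - f₂ z) (g₁ - g₂) x := by
  rw [hasGradientAt_iff_hasFDerivAt, map_sub]
  exact h₁.hasFDerivAt.sub h₂.hasFDerivAt

/-- Gradient of the kernel sum for a finite family. -/
lemma sumk_hasGradientAt (σ : ℝ) (hσ : σ ≠ 0) {K : ℕ} (y : Fin K → E) (x : E) :
    HasGradientAt (fun z => ∑ i, Real.exp (-‖z - y i‖ ^ 2 / (2 * σ ^ 2)))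
      ((σ ^ 2)⁻¹ • ∑ i, Real.exp (-‖x - y i‖ ^ 2 / (2 * σ ^ 2)) • (y i - x)) x := by
  have h := hasGradientAt_sum' (E := E) Finset.univ
    (fun i z => Real.exp (-‖z - y i‖ ^ 2 / (2 * σ ^ 2)))
    (fun i => (Real.exp (-‖x - y i‖ ^ 2 / (2 * σ ^ 2)) * (σ ^ 2)⁻¹) • (y i - x)) x
    (fun i _ => gauss_hasGradientAt σ hσ (y i) x)
  have e2 : ((σ ^ 2)⁻¹ • ∑ i, Real.exp (-‖x - y i‖ ^ 2 / (2 * σ ^ 2)) • (y i - x))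
      = ∑ i, (Real.exp (-‖x - y i‖ ^ 2 / (2 * σ ^ 2)) * (σ ^ 2)⁻¹) • (y i - x) := by
    rw [Finset.smul_sum]
    exact Finset.sum_congr rfl fun i _ => by rw [smul_smul, mul_comm]
  rw [e2]
  exact h

end Helpers

/-- For the Gaussian kernel, the normalized drift field
`V(x) = V⁺(x) − V⁻(x)` satisfies `V(x) = −σ² ∇ₓ log(q_KDE(x)/p_KDE(x))`;
in particular `V` is conservative. -/
theorem gaussian_drift_field_eq_neg_grad_log_KDE_ratio {n M N : ℕ}
    (hM : 0 < M) (hN : 0 < N) (σ : ℝ) (hσ : 0 < σ)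
    (k : EuclideanSpace ℝ (Fin n) → EuclideanSpace ℝ (Fin n) → ℝ)
    (hk : ∀ x y : EuclideanSpace ℝ (Fin n),
      k x y = Real.exp (-‖x - y‖ ^ 2 / (2 * σ ^ 2)))
    (yp : Fin M → EuclideanSpace ℝ (Fin n)) (yn : Fin N → EuclideanSpace ℝ (Fin n))
    (pKDE qKDE : EuclideanSpace ℝ (Fin n) → ℝ)
    (hp : ∀ x, pKDE x = (1 / (M : ℝ)) * ∑ m, k x (yp m))
    (hq : ∀ x, qKDE x = (1 / (N : ℝ)) * ∑ j, k x (yn j))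
    (V : EuclideanSpace ℝ (Fin n) → EuclideanSpace ℝ (Fin n))
    (hV : ∀ x, V x = (∑ m, k x (yp m))⁻¹ • ∑ m, k x (yp m) • (yp m - x)
                   - (∑ j, k x (yn j))⁻¹ • ∑ j, k x (yn j) • (yn j - x)) :
    (∀ x, V x = -(σ ^ 2 • gradient (fun x' => Real.log (qKDE x' / pKDE x')) x)) ∧
    ∃ L : EuclideanSpace ℝ (Fin n) → ℝ, ∀ x, gradient L x = V x := by
  have hσ2 : (σ : ℝ) ^ 2 ≠ 0 := pow_ne_zero 2 hσ.ne'
  have hMne : (M : ℝ) ≠ 0 := Nat.cast_ne_zero.mpr hM.ne'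
  have hNne : (N : ℝ) ≠ 0 := Nat.cast_ne_zero.mpr hN.ne'
  haveI : NeZero M := ⟨hM.ne'⟩
  haveI : NeZero N := ⟨hN.ne'⟩
  set Sp : EuclideanSpace ℝ (Fin n) → ℝ := fun x => ∑ m, k x (yp m) with hSp
  set Sq : EuclideanSpace ℝ (Fin n) → ℝ := fun x => ∑ j, k x (yn j) with hSq
  have hkpos : ∀ x y : EuclideanSpace ℝ (Fin n), 0 < k x y := fun x y => by rw [hk]; exact Real.exp_pos _
  have hSppos : ∀ x, 0 < Sp x := fun x =>
    Finset.sum_pos (fun m _ => hkpos x (yp m)) Finset.univ_nonempty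
  have hSqpos : ∀ x, 0 < Sq x := fun x =>
    Finset.sum_pos (fun j _ => hkpos x (yn j)) Finset.univ_nonempty
  -- gradients of the kernel sums
  have hgradSp : ∀ x, HasGradientAt Sp ((σ ^ 2)⁻¹ • ∑ m, k x (yp m) • (yp m - x)) x := by
    intro x
    have h := sumk_hasGradientAt σ hσ.ne' yp x
    have e1 : Sp = fun z => ∑ m, Real.exp (-‖z - yp m‖ ^ 2 / (2 * σ ^ 2)) := by
      funext z; exact Finset.sum_congr rfl fun m _ => hk z (yp m)
    have e2 : ((σ ^ 2)⁻¹ • ∑ m, k x (yp m) • (yp m - x))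
        = (σ ^ 2)⁻¹ • ∑ m, Real.exp (-‖x - yp m‖ ^ 2 / (2 * σ ^ 2)) • (yp m - x) := by
      congr 1
      exact Finset.sum_congr rfl fun m _ => by rw [hk]
    rw [e1, e2]
    exact h
  have hgradSq : ∀ x, HasGradientAt Sq ((σ ^ 2)⁻¹ • ∑ j, k x (yn j) • (yn j - x)) x := by
    intro x
    have h := sumk_hasGradientAt σ hσ.ne' yn x
    have e1 : Sq = fun z => ∑ j, Real.exp (-‖z - yn j‖ ^ 2 / (2 * σ ^ 2)) := by
      funext z; exact Finset.sum_congr rfl fun j _ => hk z (yn j)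
    have e2 : ((σ ^ 2)⁻¹ • ∑ j, k x (yn j) • (yn j - x))
        = (σ ^ 2)⁻¹ • ∑ j, Real.exp (-‖x - yn j‖ ^ 2 / (2 * σ ^ 2)) • (yn j - x) := by
      congr 1
      exact Finset.sum_congr rfl fun j _ => by rw [hk]
    rw [e1, e2]
    exact h
  -- gradient of log((1/M) * Sp) and log((1/N) * Sq)
  have hlogp : ∀ x, HasGradientAt (fun z => Real.log ((1 / (M : ℝ)) * Sp z))
      ((Sp x)⁻¹ • ((σ ^ 2)⁻¹ • ∑ m, k x (yp m) • (yp m - x))) x := by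
    intro x
    have hSne : Sp x ≠ 0 := (hSppos x).ne'
    have h := ((hgradSp x).const_mul' (1 / (M : ℝ))).log'
      (mul_ne_zero (one_div_ne_zero hMne) hSne)
    have : ((1 / (M : ℝ)) * Sp x)⁻¹ • ((1 / (M : ℝ)) • ((σ ^ 2)⁻¹ • ∑ m, k x (yp m) • (yp m - x)))
        = (Sp x)⁻¹ • ((σ ^ 2)⁻¹ • ∑ m, k x (yp m) • (yp m - x)) := by
      rw [smul_smul]
      congr 1
      field_simp
    rw [this] at h
    exact h
  have hlogq : ∀ x, HasGradientAt (fun z => Real.log ((1 / (N : ℝ)) * Sq z))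
      ((Sq x)⁻¹ • ((σ ^ 2)⁻¹ • ∑ j, k x (yn j) • (yn j - x))) x := by
    intro x
    have hSne : Sq x ≠ 0 := (hSqpos x).ne'
    have h := ((hgradSq x).const_mul' (1 / (N : ℝ))).log'
      (mul_ne_zero (one_div_ne_zero hNne) hSne)
    have : ((1 / (N : ℝ)) * Sq x)⁻¹ • ((1 / (N : ℝ)) • ((σ ^ 2)⁻¹ • ∑ j, k x (yn j) • (yn j - x)))
        = (Sq x)⁻¹ • ((σ ^ 2)⁻¹ • ∑ j, k x (yn j) • (yn j - x)) := by
      rw [smul_smul]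
      congr 1
      field_simp
    rw [this] at h
    exact h
  -- the ratio function equals a difference of logs
  have hFeq : (fun x' => Real.log (qKDE x' / pKDE x'))
      = fun z => Real.log ((1 / (N : ℝ)) * Sq z) - Real.log ((1 / (M : ℝ)) * Sp z) := by
    funext z
    rw [hq z, hp z]
    exact Real.log_div (mul_ne_zero (one_div_ne_zero hNne) (hSqpos z).ne')
      (mul_ne_zero (one_div_ne_zero hMne) (hSppos z).ne')
  have hFgrad : ∀ x, HasGradientAt (fun x' => Real.log (qKDE x' / pKDE x'))
      ((Sq x)⁻¹ • ((σ ^ 2)⁻¹ • ∑ j, k x (yn j) • (yn j - x))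
        - (Sp x)⁻¹ • ((σ ^ 2)⁻¹ • ∑ m, k x (yp m) • (yp m - x))) x := by
    intro x
    rw [hFeq]
    exact (hlogq x).sub' (hlogp x)
  have hs : ∀ (c : ℝ) (v : EuclideanSpace ℝ (Fin n)), σ ^ 2 • (c • ((σ ^ 2)⁻¹ • v)) = c • v := by
    intro c v
    rw [smul_smul, smul_smul]
    congr 1
    field_simp
  constructor
  · intro x
    rw [(hFgrad x).gradient, hV x, smul_sub, hs, hs, neg_sub]
  · refine ⟨fun z => σ ^ 2 * (Real.log ((1 / (M : ℝ)) * Sp z)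
      - Real.log ((1 / (N : ℝ)) * Sq z)), fun x => ?_⟩
    have h := (((hlogp x).sub' (hlogq x)).const_mul' (σ ^ 2)).gradient
    rw [h, hV x, smul_sub, hs, hs]
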